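/- If G is a connected α-critical graph with |V(G)| = 2α(G) + 1 (that is, with defect one), then G is isomorphic to an odd cycle C_n for some odd integer n ≥ 3. -/

import Mathlib

open SimpleGraph

/-- The stability (independence) number of the subgraph of `G` induced on the
vertex set `S`: the maximum cardinality of a stable (independent) subset of `S`. -/
noncomputable def alphaOn {V : Type*} [Fintype V] (G : SimpleGraph V) (S : Set V) : ℕ :=
  sSup {n | ∃ s : Finset V, ↑s ⊆ S ∧ (∀ u ∈ s, ∀ v ∈ s, ¬ G.Adj u v) ∧ s.card = n}

/-- The stability (independence) number `α(G)` of `G`. -/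
noncomputable def alphaNum {V : Type*} [Fintype V] (G : SimpleGraph V) : ℕ :=
  alphaOn G Set.univ

/-- The edge `{u, v}` of `G` is an α-critical edge: deleting it increases the
stability number by one. -/
def IsCriticalEdge {V : Type*} [Fintype V] (G : SimpleGraph V) (u v : V) : Prop :=
  G.Adj u v ∧ alphaNum (G.deleteEdges {s(u, v)}) = alphaNum G + 1

/-- `G` is an α-critical graph: every edge is α-critical. -/
def IsAlphaCritical {V : Type*} [Fintype V] (G : SimpleGraph V) : Prop :=
  ∀ u v, G.Adj u v → alphaNum (G.deleteEdges {s(u, v)}) = alphaNum G + 1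

/-- `S` induces a maximal induced subgraph of `G` with stability number `α(G) - 1`:
`α(G[S]) = α(G) - 1` and adding any further vertex raises the stability number to `α(G)`. -/
def IsMaxAlphaSub {V : Type*} [Fintype V] (G : SimpleGraph V) (S : Set V) : Prop :=
  alphaOn G S + 1 = alphaNum G ∧ ∀ w ∉ S, alphaOn G (insert w S) = alphaNum G

/-- The 1-join `j(G, G₀, H, H₀)` of `G` and `H`, where `A = V(G₀)` and `B = V(H₀)`:
the disjoint union of `G` and `H` together with all edges between `V(G) ∖ A` and
`V(H) ∖ B`. -/
def oneJoin {α β : Type*} (G : SimpleGraph α) (H : SimpleGraph β)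
    (A : Set α) (B : Set β) : SimpleGraph (α ⊕ β) :=
  SimpleGraph.fromRel (fun x y =>
    (∃ a b, x = Sum.inl a ∧ y = Sum.inl b ∧ G.Adj a b) ∨
    (∃ a b, x = Sum.inr a ∧ y = Sum.inr b ∧ H.Adj a b) ∨
    (∃ a b, x = Sum.inl a ∧ y = Sum.inr b ∧ a ∉ A ∧ b ∉ B))

/-- The edge-vertex composition `c(G, e, H, v)` with `e = {v₁, v₂}` and
`N_H(v) = U₁ ⊔ U₂`: vertex set `V(G) ⊔ (V(H) ∖ {v})`, edge set
`(E(G) ∖ {e}) ∪ E(H - v) ∪ {v₁u : u ∈ U₁} ∪ {v₂u : u ∈ U₂}`. -/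
def evComp {α β : Type*} (G : SimpleGraph α) (v₁ v₂ : α) (H : SimpleGraph β) (v : β)
    (U₁ U₂ : Set β) : SimpleGraph (α ⊕ {b : β // b ≠ v}) :=
  SimpleGraph.fromRel (fun x y =>
    (∃ a b, x = Sum.inl a ∧ y = Sum.inl b ∧ G.Adj a b ∧ s(a, b) ≠ s(v₁, v₂)) ∨
    (∃ a b : {b : β // b ≠ v}, x = Sum.inr a ∧ y = Sum.inr b ∧ H.Adj a b) ∨
    (∃ b : {b : β // b ≠ v}, x = Sum.inl v₁ ∧ y = Sum.inr b ∧ (b : β) ∈ U₁) ∨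
    (∃ b : {b : β // b ≠ v}, x = Sum.inl v₂ ∧ y = Sum.inr b ∧ (b : β) ∈ U₂))

/-- The splitting `s(H, v)` of the vertex `v` of `H`, with `N_H(v) = N₁ ⊔ N₂`.
The new vertices `v′`, `v″`, `u` are represented by `Sum.inr 0`, `Sum.inr 1`,
`Sum.inr 2` respectively. -/
def splitting {β : Type*} (H : SimpleGraph β) (v : β) (N₁ N₂ : Set β) :
    SimpleGraph ({b : β // b ≠ v} ⊕ Fin 3) :=
  SimpleGraph.fromRel (fun x y =>
    (∃ a b : {b : β // b ≠ v}, x = Sum.inl a ∧ y = Sum.inl b ∧ H.Adj a b) ∨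
    (∃ a : {b : β // b ≠ v}, x = Sum.inl a ∧ y = Sum.inr 0 ∧ (a : β) ∈ N₁) ∨
    (∃ a : {b : β // b ≠ v}, x = Sum.inl a ∧ y = Sum.inr 1 ∧ (a : β) ∈ N₂) ∨
    (x = Sum.inr 0 ∧ y = Sum.inr 2) ∨ (x = Sum.inr 1 ∧ y = Sum.inr 2))

/-- The duplication `d(G, v)` of the vertex `v` of `G`: a new vertex `v′`
(represented by `Sum.inr ()`) is added, adjacent exactly to the closed
neighborhood `N_G[v]`. -/
def duplication {α : Type*} (G : SimpleGraph α) (v : α) : SimpleGraph (α ⊕ Unit) :=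
  SimpleGraph.fromRel (fun x y =>
    (∃ a b, x = Sum.inl a ∧ y = Sum.inl b ∧ G.Adj a b) ∨
    (∃ a, x = Sum.inl a ∧ y = Sum.inr () ∧ a ∈ insert v (G.neighborSet v)))

/-- A graph is duplication free iff it contains no pair of adjacent vertices
with equal closed neighborhoods. -/
def DuplicationFree {α : Type*} (G : SimpleGraph α) : Prop :=
  ∀ u v, G.Adj u v → insert u (G.neighborSet u) ≠ insert v (G.neighborSet v)

/-- `G` is 2-connected: it has at least three vertices and the deletion of any
single vertex leaves it connected. -/
def TwoConnected {V : Type*} [Fintype V] (G : SimpleGraph V) : Prop :=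
  3 ≤ Fintype.card V ∧ ∀ x : V, (G.induce {x}ᶜ).Connected

namespace AlphaCriticalDev

open Finset

variable {V : Type*} [Fintype V] [DecidableEq V]



open SimpleGraph Finset


/-- stable finset -/
def Stab (G : SimpleGraph V) (s : Finset V) : Prop := ∀ u ∈ s, ∀ v ∈ s, ¬ G.Adj u v

noncomputable def alF (G : SimpleGraph V) (A : Finset V) : ℕ :=
  sSup {n | ∃ s : Finset V, s ⊆ A ∧ Stab G s ∧ s.card = n}

lemma alF_set_nonempty (G : SimpleGraph V) (A : Finset V) :
    Set.Nonempty {n | ∃ s : Finset V, s ⊆ A ∧ Stab G s ∧ s.card = n} :=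
  ⟨0, ∅, by simp [Stab]⟩

lemma alF_set_bdd (G : SimpleGraph V) (A : Finset V) :
    BddAbove {n | ∃ s : Finset V, s ⊆ A ∧ Stab G s ∧ s.card = n} := by
  refine ⟨A.card, ?_⟩
  rintro n ⟨s, hs, _, rfl⟩
  exact Finset.card_le_card hs

lemma le_alF {G : SimpleGraph V} {A s : Finset V} (hs : s ⊆ A) (hst : Stab G s) :
    s.card ≤ alF G A :=
  le_csSup (alF_set_bdd G A) ⟨s, hs, hst, rfl⟩

lemma alF_witness (G : SimpleGraph V) (A : Finset V) :
    ∃ s : Finset V, s ⊆ A ∧ Stab G s ∧ s.card = alF G A := by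
  have := Nat.sSup_mem (s := {n | ∃ s : Finset V, s ⊆ A ∧ Stab G s ∧ s.card = n})
    (alF_set_nonempty G A) (alF_set_bdd G A)
  exact this

lemma alF_mono {G : SimpleGraph V} {A B : Finset V} (h : A ⊆ B) : alF G A ≤ alF G B := by
  obtain ⟨s, hs, hst, hc⟩ := alF_witness G A
  rw [← hc]; exact le_alF (hs.trans h) hst

lemma one_le_alF {G : SimpleGraph V} {A : Finset V} {x : V} (hx : x ∈ A) : 1 ≤ alF G A := by
  have : ({x} : Finset V).card ≤ alF G A := le_alF (by simpa) (by simp [Stab])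
  simpa using this

/-- `alphaNum` agrees with `alF` on `univ`. -/
lemma alphaNum_eq_alF (G : SimpleGraph V) : alphaNum G = alF G Finset.univ := by
  unfold alphaNum alphaOn alF
  congr 1
  ext n
  constructor
  · rintro ⟨s, _, h2, h3⟩; exact ⟨s, by simp, h2, h3⟩
  · rintro ⟨s, _, h2, h3⟩; exact ⟨s, by simp, h2, h3⟩

lemma stab_mono {G : SimpleGraph V} {s t : Finset V} (h : s ⊆ t) (ht : Stab G t) : Stab G s :=
  fun u hu v hv => ht u (h hu) v (h hv)

/-- stable in `G` is stable in a subgraph -/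
lemma stab_deleteEdges {G : SimpleGraph V} {E : Set (Sym2 V)} {s : Finset V} (hs : Stab G s) :
    Stab (G.deleteEdges E) s := by
  intro u hu v hv hadj
  exact hs u hu v hv hadj.1

/-- deleting one edge increases alF by at most one -/
lemma alF_deleteEdges_le (G : SimpleGraph V) (A : Finset V) (x y : V) :
    alF (G.deleteEdges {s(x, y)}) A ≤ alF G A + 1 := by
  obtain ⟨s, hs, hst, hc⟩ := alF_witness (G.deleteEdges {s(x, y)}) A
  have herase : Stab G (s.erase x) := by
    intro u hu v hv hadj
    refine hst u (Finset.mem_of_mem_erase hu) v (Finset.mem_of_mem_erase hv) ?_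
    rw [SimpleGraph.deleteEdges_adj]
    refine ⟨hadj, ?_⟩
    simp only [Set.mem_singleton_iff, Sym2.eq, Sym2.rel_iff', Prod.mk.injEq, Prod.swap_prod_mk]
    rintro (⟨rfl, rfl⟩ | ⟨rfl, rfl⟩)
    · exact (Finset.notMem_erase u s) hu
    · exact (Finset.notMem_erase v s) hv
  have h1 : (s.erase x).card ≤ alF G A := le_alF ((Finset.erase_subset _ _).trans hs) herase
  have h2 : s.card ≤ (s.erase x).card + 1 := by
    by_cases hx : x ∈ s
    · rw [Finset.card_erase_of_mem hx]; omega
    · rw [Finset.erase_eq_of_notMem hx]; omega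
  omega

lemma le_alF_deleteEdges (G : SimpleGraph V) (A : Finset V) (E : Set (Sym2 V)) :
    alF G A ≤ alF (G.deleteEdges E) A := by
  obtain ⟨s, hs, hst, hc⟩ := alF_witness G A
  rw [← hc]; exact le_alF hs (stab_deleteEdges hst)

/-- The key translation of criticality of an edge: a stable set of size `alF - 1`
avoiding the closed neighborhoods of both endpoints. -/
lemma crit_witness {G : SimpleGraph V} {A : Finset V} {x y : V}
    (hadj : G.Adj x y)
    (hcrit : alF (G.deleteEdges {s(x, y)}) A = alF G A + 1) :
    ∃ W : Finset V, W ⊆ A ∧ Stab G W ∧ W.card + 1 = alF G A ∧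
      ∀ w ∈ W, ¬ G.Adj x w ∧ ¬ G.Adj y w ∧ w ≠ x ∧ w ≠ y := by
  classical
  obtain ⟨T, hTA, hTst, hTc⟩ := alF_witness (G.deleteEdges {s(x, y)}) A
  rw [hcrit] at hTc
  -- x and y both belong to T
  have hxyT : x ∈ T ∧ y ∈ T := by
    by_contra hcon
    have hTG : Stab G T := by
      intro u hu v hv hadj'
      refine hTst u hu v hv ?_
      rw [SimpleGraph.deleteEdges_adj]
      refine ⟨hadj', ?_⟩
      rw [Set.mem_singleton_iff, Sym2.eq_iff]
      rintro (⟨rfl, rfl⟩ | ⟨rfl, rfl⟩)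
      · exact hcon ⟨hu, hv⟩
      · exact hcon ⟨hv, hu⟩
    have := le_alF hTA hTG
    omega
  obtain ⟨hxT, hyT⟩ := hxyT
  have hxy : x ≠ y := hadj.ne
  refine ⟨(T.erase x).erase y, ((Finset.erase_subset _ _).trans (Finset.erase_subset _ _)).trans hTA, ?_, ?_, ?_⟩
  · -- stable in G
    intro u hu v hv hadj'
    have hu' : u ∈ T := Finset.mem_of_mem_erase (Finset.mem_of_mem_erase hu)
    have hv' : v ∈ T := Finset.mem_of_mem_erase (Finset.mem_of_mem_erase hv)
    have hux : u ≠ x := Finset.ne_of_mem_erase (Finset.mem_of_mem_erase hu)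
    have huy : u ≠ y := Finset.ne_of_mem_erase hu
    have hvx : v ≠ x := Finset.ne_of_mem_erase (Finset.mem_of_mem_erase hv)
    have hvy : v ≠ y := Finset.ne_of_mem_erase hv
    refine hTst u hu' v hv' ?_
    rw [SimpleGraph.deleteEdges_adj]
    refine ⟨hadj', ?_⟩
    rw [Set.mem_singleton_iff, Sym2.eq_iff]
    rintro (⟨rfl, rfl⟩ | ⟨rfl, rfl⟩)
    · exact hux rfl
    · exact hvx rfl
  · -- cardinality
    have hyT' : y ∈ T.erase x := Finset.mem_erase.2 ⟨hxy.symm, hyT⟩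
    have e1 := Finset.card_erase_of_mem hyT'
    have e2 := Finset.card_erase_of_mem hxT
    have hle : 1 ≤ #(T.erase x) := Finset.card_pos.2 ⟨y, hyT'⟩
    have hle2 : 1 ≤ #T := Finset.card_pos.2 ⟨x, hxT⟩
    omega
  · -- avoidance
    intro w hw
    have hw' : w ∈ T := Finset.mem_of_mem_erase (Finset.mem_of_mem_erase hw)
    have hwx : w ≠ x := Finset.ne_of_mem_erase (Finset.mem_of_mem_erase hw)
    have hwy : w ≠ y := Finset.ne_of_mem_erase hw
    refine ⟨?_, ?_, hwx, hwy⟩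
    · intro hxw
      refine hTst x hxT w hw' ?_
      rw [SimpleGraph.deleteEdges_adj]
      refine ⟨hxw, ?_⟩
      rw [Set.mem_singleton_iff, Sym2.eq_iff]
      rintro (⟨h1, h2⟩ | ⟨h1, h2⟩)
      · exact hwy h2
      · exact hwx h2
    · intro hyw
      refine hTst y hyT w hw' ?_
      rw [SimpleGraph.deleteEdges_adj]
      refine ⟨hyw, ?_⟩
      rw [Set.mem_singleton_iff, Sym2.eq_iff]
      rintro (⟨h1, h2⟩ | ⟨h1, h2⟩)
      · exact hwy h2
      · exact hwx h2

open Classical in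
noncomputable def nbrF (G : SimpleGraph V) (v : V) : Finset V :=
  Finset.univ.filter (fun w => G.Adj v w)

lemma mem_nbrF {G : SimpleGraph V} {v w : V} : w ∈ nbrF G v ↔ G.Adj v w := by
  classical
  simp [nbrF]

/-- **Neighborhood lemma**: in a graph all of whose edges (within `A`) are critical and
all of whose vertices (in `A`) have a neighbor in `A`, every stable `S ⊆ A` satisfies
`|N(S) ∩ A| ≥ |S|`. -/
lemma NL (G : SimpleGraph V) (A : Finset V)
    (hnb : ∀ x ∈ A, ∃ y ∈ A, G.Adj x y)
    (hcrit : ∀ x y, x ∈ A → y ∈ A → G.Adj x y →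
      ∃ W, W ⊆ A ∧ Stab G W ∧ W.card + 1 = alF G A ∧
        ∀ w ∈ W, ¬G.Adj x w ∧ ¬G.Adj y w ∧ w ≠ x ∧ w ≠ y) :
    ∀ S : Finset V, S ⊆ A → Stab G S →
      S.card ≤ ((S.biUnion (nbrF G)) ∩ A).card := by
  classical
  suffices H : ∀ n (S : Finset V), S.card = n → S ⊆ A → Stab G S →
      S.card ≤ ((S.biUnion (nbrF G)) ∩ A).card by
    exact fun S hSA hst => H S.card S rfl hSA hst
  intro n
  induction n using Nat.strong_induction_on with
  | _ n ih =>
  intro S hScard hSA hst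
  by_contra hcon
  push_neg at hcon
  set NS := (S.biUnion (nbrF G)) ∩ A with hNS
  -- NS is disjoint from S
  have hdisj : ∀ w ∈ NS, w ∉ S := by
    intro w hw hwS
    obtain ⟨s, hs, hws⟩ := Finset.mem_biUnion.1 (Finset.mem_inter.1 hw).1
    exact hst s hs w hwS (by rwa [← mem_nbrF])
  have hSpos : 0 < S.card := by omega
  -- Hall condition
  have hall : ∀ U : Finset V, U ⊆ NS →
      U.card ≤ (U.biUnion (fun u => S ∩ (nbrF G) u)).card := by
    intro U hU
    by_contra hUc
    push_neg at hUc
    set t := U.biUnion (fun u => S ∩ (nbrF G) u) with ht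
    have htS : t ⊆ S := by
      intro w hw
      obtain ⟨u, hu, hw'⟩ := Finset.mem_biUnion.1 hw
      exact (Finset.mem_inter.1 hw').1
    have htne : t.Nonempty := by
      have hUne : U.Nonempty := Finset.card_pos.1 (by omega)
      obtain ⟨u, hu⟩ := hUne
      obtain ⟨s, hs, hus⟩ := Finset.mem_biUnion.1 (Finset.mem_inter.1 (hU hu)).1
      exact ⟨s, Finset.mem_biUnion.2 ⟨u, hu, Finset.mem_inter.2 ⟨hs, by
        rw [mem_nbrF] at hus ⊢; exact hus.symm⟩⟩⟩
    set S₁ := S \ t with hS₁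
    have hS₁card : S₁.card + t.card = S.card := Finset.card_sdiff_add_card_eq_card htS
    have hUNS : U.card ≤ NS.card := Finset.card_le_card hU
    have htpos : 0 < t.card := Finset.card_pos.2 htne
    have hS₁lt : S₁.card < n := by omega
    have hS₁sub : S₁ ⊆ A := (Finset.sdiff_subset).trans hSA
    have hS₁st : Stab G S₁ := stab_mono Finset.sdiff_subset hst
    have hS₁ih := ih S₁.card hS₁lt S₁ rfl hS₁sub hS₁st
    -- N(S₁) ∩ A ⊆ NS \ U
    have hsub : (S₁.biUnion (nbrF G)) ∩ A ⊆ NS \ U := by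
      intro w hw
      obtain ⟨hw1, hw2⟩ := Finset.mem_inter.1 hw
      obtain ⟨s₁, hs₁, hws₁⟩ := Finset.mem_biUnion.1 hw1
      refine Finset.mem_sdiff.2 ⟨Finset.mem_inter.2 ⟨Finset.mem_biUnion.2
        ⟨s₁, Finset.mem_sdiff.1 hs₁ |>.1, hws₁⟩, hw2⟩, ?_⟩
      intro hwU
      have : s₁ ∈ t := Finset.mem_biUnion.2 ⟨w, hwU, Finset.mem_inter.2
        ⟨(Finset.mem_sdiff.1 hs₁).1, by
          rw [mem_nbrF] at hws₁ ⊢; exact hws₁.symm⟩⟩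
      exact (Finset.mem_sdiff.1 hs₁).2 this
    have hc1 : ((S₁.biUnion (nbrF G)) ∩ A).card ≤ NS.card - U.card := by
      have := Finset.card_le_card hsub
      rwa [Finset.card_sdiff_of_subset hU] at this
    omega
  -- apply Hall's theorem over the subtype of NS
  have hallT : ∀ s : Finset {x // x ∈ NS},
      s.card ≤ (s.biUnion (fun u => S ∩ (nbrF G) u.val)).card := by
    intro s
    have h1 : (s.image Subtype.val).card = s.card :=
      Finset.card_image_of_injective _ Subtype.val_injective
    have h2 : (s.image Subtype.val) ⊆ NS := by
      intro x hx; obtain ⟨u, hu, rfl⟩ := Finset.mem_image.1 hx; exact u.2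
    have h3 := hall _ h2
    rw [h1] at h3
    refine h3.trans (le_of_eq ?_)
    congr 1
    ext x
    simp only [Finset.mem_biUnion, Finset.mem_image]
    constructor
    · rintro ⟨u, ⟨w, hw, rfl⟩, hx⟩
      exact ⟨w, hw, hx⟩
    · rintro ⟨w, hw, hx⟩
      exact ⟨w.val, ⟨w, hw, rfl⟩, hx⟩
  obtain ⟨M, hMinj, hMmem⟩ :=
    (Finset.all_card_le_biUnion_card_iff_exists_injective
      (fun u : {x // x ∈ NS} => S ∩ (nbrF G) u.val)).1 hallT
  have hMS : ∀ u, M u ∈ S := fun u => (Finset.mem_inter.1 (hMmem u)).1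
  have hMadj : ∀ u, G.Adj u.val (M u) := fun u => by
    have := (Finset.mem_inter.1 (hMmem u)).2
    rwa [mem_nbrF] at this
  -- the image of M
  set Mim := (Finset.univ : Finset {x // x ∈ NS}).image M with hMim
  have hMimcard : Mim.card = NS.card := by
    rw [hMim, Finset.card_image_of_injective _ hMinj, Finset.card_univ,
      Fintype.card_coe]
  -- find x₀ ∈ S not in the image of M
  have hx₀ : ∃ x₀ ∈ S, x₀ ∉ Mim := by
    by_contra hc
    push_neg at hc
    have : S ⊆ Mim := hc
    have := Finset.card_le_card this
    omega
  obtain ⟨x₀, hx₀S, hx₀M⟩ := hx₀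
  obtain ⟨y, hyA, hy⟩ := hnb x₀ (hSA hx₀S)
  have hyNS : y ∈ NS := Finset.mem_inter.2
    ⟨Finset.mem_biUnion.2 ⟨x₀, hx₀S, mem_nbrF.2 hy⟩, hyA⟩
  set x₁ := M ⟨y, hyNS⟩ with hx₁
  have hx₁S : x₁ ∈ S := hMS _
  have hyx₁ : G.Adj y x₁ := hMadj ⟨y, hyNS⟩
  obtain ⟨W, hWA, hWst, hWcard, hWav⟩ := hcrit x₀ y (hSA hx₀S) hyA hy
  have hyW : y ∉ W := fun h => ((hWav y h).2.2.2) rfl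
  have hx₀W : x₀ ∉ W := fun h => ((hWav x₀ h).2.2.1) rfl
  have hx₁W : x₁ ∉ W := fun h => ((hWav x₁ h).2.1) hyx₁
  have hx₀x₁ : x₀ ≠ x₁ := fun h => hx₀M (by rw [h, hx₁]; exact Finset.mem_image_of_mem _ (Finset.mem_univ _))
  -- injection from W ∩ NS into (S \ W) \ {x₀, x₁}
  have hinj : (W ∩ NS).card ≤ ((S \ W) \ {x₀, x₁}).card := by
    have : ∀ w ∈ W ∩ NS, (fun w => if h : w ∈ NS then M ⟨w, h⟩ else w) w ∈ (S \ W) \ {x₀, x₁} := by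
      intro w hw
      obtain ⟨hwW, hwNS⟩ := Finset.mem_inter.1 hw
      simp only [dif_pos hwNS]
      have hMw : M ⟨w, hwNS⟩ ∈ S := hMS _
      have hadjw : G.Adj w (M ⟨w, hwNS⟩) := hMadj ⟨w, hwNS⟩
      refine Finset.mem_sdiff.2 ⟨Finset.mem_sdiff.2 ⟨hMw, ?_⟩, ?_⟩
      · intro hMwW
        exact hWst w hwW _ hMwW hadjw
      · simp only [Finset.mem_insert, Finset.mem_singleton]
        push_neg
        constructor
        · intro h
          exact hx₀M (by rw [← h]; exact Finset.mem_image_of_mem _ (Finset.mem_univ _))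
        · intro h
          have : (⟨w, hwNS⟩ : {x // x ∈ NS}) = ⟨y, hyNS⟩ := hMinj (by rw [hx₁] at h; exact h)
          have hwy : w = y := congrArg Subtype.val this
          exact hyW (hwy ▸ hwW)
    refine Finset.card_le_card_of_injOn _ this ?_
    intro a ha b hb hab
    obtain ⟨haW, haNS⟩ := Finset.mem_inter.1 ha
    obtain ⟨hbW, hbNS⟩ := Finset.mem_inter.1 hb
    simp only [dif_pos haNS, dif_pos hbNS] at hab
    have := hMinj hab
    exact congrArg Subtype.val this
  -- build the too-large stable set T
  set T := (W \ NS) ∪ S with hT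
  have hTA : T ⊆ A := Finset.union_subset ((Finset.sdiff_subset).trans hWA) hSA
  have hTst : Stab G T := by
    intro u hu v hv hadj
    rcases Finset.mem_union.1 hu with hu' | hu' <;> rcases Finset.mem_union.1 hv with hv' | hv'
    · exact hWst u (Finset.mem_sdiff.1 hu').1 v (Finset.mem_sdiff.1 hv').1 hadj
    · -- u ∈ W \ NS, v ∈ S
      refine (Finset.mem_sdiff.1 hu').2 (Finset.mem_inter.2 ⟨Finset.mem_biUnion.2
        ⟨v, hv', mem_nbrF.2 hadj.symm⟩,
        hWA (Finset.mem_sdiff.1 hu').1⟩)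
    · refine (Finset.mem_sdiff.1 hv').2 (Finset.mem_inter.2 ⟨Finset.mem_biUnion.2
        ⟨u, hu', mem_nbrF.2 hadj⟩,
        hWA (Finset.mem_sdiff.1 hv').1⟩)
    · exact hst u hu' v hv' hadj
  have hTle : T.card ≤ alF G A := le_alF hTA hTst
  -- cardinality computations
  have e1 : (W \ NS).card + (W ∩ NS).card = W.card :=
    Finset.card_sdiff_add_card_inter W NS
  have e2 : T.card + ((W \ NS) ∩ S).card = (W \ NS).card + S.card :=
    Finset.card_union_add_card_inter _ _
  have e3 : ((W \ NS) ∩ S).card ≤ (W ∩ S).card := by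
    refine Finset.card_le_card ?_
    intro a ha
    obtain ⟨h1, h2⟩ := Finset.mem_inter.1 ha
    exact Finset.mem_inter.2 ⟨(Finset.mem_sdiff.1 h1).1, h2⟩
  have e4 : (S \ W).card + (S ∩ W).card = S.card := Finset.card_sdiff_add_card_inter S W
  have e5 : ((S \ W) \ {x₀, x₁}).card + 2 ≤ (S \ W).card := by
    have hx₀' : x₀ ∈ S \ W := Finset.mem_sdiff.2 ⟨hx₀S, hx₀W⟩
    have hx₁' : x₁ ∈ S \ W := Finset.mem_sdiff.2 ⟨hx₁S, hx₁W⟩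
    have hsub2 : ({x₀, x₁} : Finset V) ⊆ S \ W := by
      intro a ha
      rcases Finset.mem_insert.1 ha with rfl | ha'
      · exact hx₀'
      · rw [Finset.mem_singleton.1 ha']; exact hx₁'
    have hc2 : ({x₀, x₁} : Finset V).card = 2 := Finset.card_pair hx₀x₁
    rw [Finset.card_sdiff_of_subset hsub2, hc2]
    have := Finset.card_le_card hsub2
    omega
  have e6 : (S ∩ W).card = (W ∩ S).card := by rw [Finset.inter_comm]
  omega

open Classical in
noncomputable def eCount (G : SimpleGraph V) : ℕ :=
  (Finset.univ.filter (fun e : Sym2 V => e ∈ G.edgeSet)).card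

lemma eCount_lt {G : SimpleGraph V} {x y : V} (h : G.Adj x y) :
    eCount (G.deleteEdges {s(x, y)}) < eCount G := by
  classical
  unfold eCount
  refine Finset.card_lt_card ?_
  rw [Finset.ssubset_iff_of_subset]
  · refine ⟨s(x, y), ?_, ?_⟩
    · simp only [Finset.mem_filter, Finset.mem_univ, true_and]
      rwa [SimpleGraph.mem_edgeSet]
    · simp only [Finset.mem_filter, Finset.mem_univ, true_and]
      rw [SimpleGraph.edgeSet_deleteEdges]
      simp
  · intro e he
    simp only [Finset.mem_filter, Finset.mem_univ, true_and] at he ⊢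
    rw [SimpleGraph.edgeSet_deleteEdges] at he
    exact he.1

/-- **Core lemma**: a graph (induced on `A`) with `2α > |A|` has a vertex in every
maximum stable set. -/
lemma KC (G : SimpleGraph V) (A : Finset V) (h : A.card < 2 * alF G A) :
    ∃ z ∈ A, ∀ s : Finset V, s ⊆ A → Stab G s → s.card = alF G A → z ∈ s := by
  classical
  suffices H : ∀ m (G : SimpleGraph V), eCount G = m → A.card < 2 * alF G A →
      ∃ z ∈ A, ∀ s : Finset V, s ⊆ A → Stab G s → s.card = alF G A → z ∈ s by
    exact H (eCount G) G rfl h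
  intro m
  induction m using Nat.strong_induction_on with
  | _ m ih =>
  intro G hm h
  by_cases hdel : ∃ x y, x ∈ A ∧ y ∈ A ∧ G.Adj x y ∧
      alF (G.deleteEdges {s(x, y)}) A = alF G A
  · obtain ⟨x, y, hxA, hyA, hadj, heq⟩ := hdel
    set G' := G.deleteEdges {s(x, y)} with hG'
    have hlt : eCount G' < m := hm ▸ eCount_lt hadj
    obtain ⟨z, hzA, hz⟩ := ih (eCount G') hlt G' rfl (by rw [heq]; exact h)
    refine ⟨z, hzA, ?_⟩
    intro s hsA hsst hscard
    exact hz s hsA (stab_deleteEdges hsst) (by rw [heq]; exact hscard)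
  · push_neg at hdel
    have hcritAll : ∀ x y, x ∈ A → y ∈ A → G.Adj x y →
        alF (G.deleteEdges {s(x, y)}) A = alF G A + 1 := by
      intro x y hxA hyA hadj
      have h1 := alF_deleteEdges_le G A x y
      have h2 := le_alF_deleteEdges G A {s(x, y)}
      have h3 := hdel x y hxA hyA hadj
      omega
    by_cases hiso : ∃ x ∈ A, ∀ y ∈ A, ¬G.Adj x y
    · obtain ⟨x, hxA, hx⟩ := hiso
      refine ⟨x, hxA, ?_⟩
      intro s hsA hsst hscard
      by_contra hxs
      have hstab : Stab G (insert x s) := by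
        intro u hu v hv hadj
        rcases Finset.mem_insert.1 hu with rfl | hu'
        · rcases Finset.mem_insert.1 hv with rfl | hv'
          · exact (G.loopless.irrefl _) hadj
          · exact hx v (hsA hv') hadj
        · rcases Finset.mem_insert.1 hv with rfl | hv'
          · exact hx u (hsA hu') hadj.symm
          · exact hsst u hu' v hv' hadj
      have hsub : insert x s ⊆ A := Finset.insert_subset hxA hsA
      have := le_alF hsub hstab
      rw [Finset.card_insert_of_notMem hxs] at this
      omega
    · push_neg at hiso
      exfalso
      have hcrit' : ∀ x y, x ∈ A → y ∈ A → G.Adj x y →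
          ∃ W, W ⊆ A ∧ Stab G W ∧ W.card + 1 = alF G A ∧
            ∀ w ∈ W, ¬G.Adj x w ∧ ¬G.Adj y w ∧ w ≠ x ∧ w ≠ y := by
        intro x y hxA hyA hadj
        exact crit_witness hadj (hcritAll x y hxA hyA hadj)
      obtain ⟨S, hSA, hSst, hScard⟩ := alF_witness G A
      have hNL := NL G A hiso hcrit' S hSA hSst
      have hsub : (S.biUnion (nbrF G)) ∩ A ⊆ A \ S := by
        intro w hw
        obtain ⟨hw1, hw2⟩ := Finset.mem_inter.1 hw
        refine Finset.mem_sdiff.2 ⟨hw2, ?_⟩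
        intro hwS
        obtain ⟨s', hs', hws'⟩ := Finset.mem_biUnion.1 hw1
        exact hSst s' hs' w hwS (mem_nbrF.1 hws')
      have hc := (Finset.card_le_card hsub)
      rw [Finset.card_sdiff_of_subset hSA] at hc
      have := Finset.card_le_card hSA
      omega

/-- Main counting argument: in a connected α-critical graph with defect one,
every vertex has degree at most 2. -/
lemma degree_le_two (G : SimpleGraph V)
    (hnbr : ∀ x : V, ∃ y, G.Adj x y)
    (hcritU : ∀ x y : V, G.Adj x y →
      alF (G.deleteEdges {s(x, y)}) Finset.univ = alF G Finset.univ + 1)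
    (hcard : Fintype.card V = 2 * alF G Finset.univ + 1)
    (v : V) : (nbrF G v).card ≤ 2 := by
  classical
  by_contra hd
  push_neg at hd
  set α := alF G Finset.univ with hα
  set NB := insert v (nbrF G v) with hNB
  set X := Finset.univ \ NB with hX
  set d := (nbrF G v).card with hdd
  have hvnb : v ∉ nbrF G v := by
    rw [mem_nbrF]; exact G.loopless.irrefl v
  have hNBcard : NB.card = d + 1 := by
    rw [hNB, Finset.card_insert_of_notMem hvnb]
  have hXcard : X.card + (d + 1) = Fintype.card V := by
    rw [hX, Finset.card_sdiff_of_subset (Finset.subset_univ NB), hNBcard, Finset.card_univ]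
    have : NB.card ≤ Fintype.card V := by
      rw [← Finset.card_univ]; exact Finset.card_le_card (Finset.subset_univ NB)
    rw [hNBcard] at this
    omega
  have hmemX : ∀ w : V, w ∈ X ↔ (w ≠ v ∧ ¬G.Adj v w) := by
    intro w
    rw [hX, Finset.mem_sdiff, hNB, Finset.mem_insert, mem_nbrF]
    constructor
    · rintro ⟨-, h2⟩; push_neg at h2; exact h2
    · rintro ⟨h1, h2⟩; exact ⟨Finset.mem_univ w, by push_neg; exact ⟨h1, h2⟩⟩
  -- the critical stable sets W_u for each neighbor u of v, all inside X
  have hW : ∀ u ∈ nbrF G v, ∃ W : Finset V, W ⊆ X ∧ Stab G W ∧ W.card + 1 = α ∧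
      ∀ w ∈ W, ¬G.Adj u w := by
    intro u hu
    rw [mem_nbrF] at hu
    obtain ⟨W, hWA, hWst, hWcard, hWav⟩ := crit_witness hu (hcritU v u hu)
    refine ⟨W, ?_, hWst, hWcard, fun w hw => ((hWav w hw).2.1)⟩
    intro w hw
    rw [hmemX]
    exact ⟨(hWav w hw).2.2.1, (hWav w hw).1⟩
  -- alpha of X
  set αH := alF G X with hαH
  have hXins : ∀ s : Finset V, s ⊆ X → Stab G s → Stab G (insert v s) ∧ v ∉ s := by
    intro s hs hst
    constructor
    · intro a ha b hb hadj
      rcases Finset.mem_insert.1 ha with rfl | ha'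
      · rcases Finset.mem_insert.1 hb with rfl | hb'
        · exact G.loopless.irrefl _ hadj
        · exact ((hmemX b).1 (hs hb')).2 hadj
      · rcases Finset.mem_insert.1 hb with rfl | hb'
        · exact ((hmemX a).1 (hs ha')).2 hadj.symm
        · exact hst a ha' b hb' hadj
    · intro hvs
      exact ((hmemX v).1 (hs hvs)).1 rfl
  have hαHα : αH + 1 = α := by
    have hdpos : 0 < d := by omega
    obtain ⟨u₀, hu₀⟩ := Finset.card_pos.1 hdpos
    obtain ⟨W, hWX, hWst, hWcard, -⟩ := hW u₀ hu₀
    have h1 : W.card ≤ αH := le_alF hWX hWst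
    obtain ⟨s, hsX, hsst, hscard⟩ := alF_witness G X
    obtain ⟨hins, hvs⟩ := hXins s hsX hsst
    have h2 : (insert v s).card ≤ α := le_alF (Finset.subset_univ _) hins
    rw [Finset.card_insert_of_notMem hvs] at h2
    omega
  -- the core of X
  set C := X.filter (fun c => ∀ s : Finset V, s ⊆ X → Stab G s → s.card = αH → c ∈ s)
    with hC
  have hCin : ∀ c ∈ C, ∀ s : Finset V, s ⊆ X → Stab G s → s.card = αH → c ∈ s := by
    intro c hc
    exact (Finset.mem_filter.1 hc).2
  have hCX : C ⊆ X := Finset.filter_subset _ _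
  -- C is contained in every W_u, hence stable and with neighborhoods inside X
  have hCW : ∀ u ∈ nbrF G v, ∀ c ∈ C, ∀ (W : Finset V), W ⊆ X → Stab G W →
      W.card + 1 = α → c ∈ W := by
    intro u hu c hc W hWX hWst hWcard
    exact hCin c hc W hWX hWst (by omega)
  have hCstab : Stab G C := by
    have hdpos : 0 < d := by omega
    obtain ⟨u₀, hu₀⟩ := Finset.card_pos.1 hdpos
    obtain ⟨W, hWX, hWst, hWcard, -⟩ := hW u₀ hu₀
    refine stab_mono ?_ hWst
    intro c hc
    exact hCin c hc W hWX hWst (by omega)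
  have hCnbr : ∀ c ∈ C, ∀ w, G.Adj c w → w ∈ X := by
    intro c hc w hcw
    rw [hmemX]
    constructor
    · rintro rfl
      exact ((hmemX c).1 (hCX hc)).2 hcw.symm
    · intro hvw
      obtain ⟨W, hWX, hWst, hWcard, hWav⟩ := hW w (mem_nbrF.2 hvw)
      have hcW : c ∈ W := hCin c hc W hWX hWst (by omega)
      exact hWav c hcW hcw.symm
  set NSC := C.biUnion (nbrF G) with hNSC
  have hNSCX : NSC ⊆ X := by
    intro w hw
    obtain ⟨c, hc, hcw⟩ := Finset.mem_biUnion.1 hw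
    exact hCnbr c hc w (mem_nbrF.1 hcw)
  have hNSCC : ∀ w ∈ NSC, w ∉ C := by
    intro w hw hwC
    obtain ⟨c, hc, hcw⟩ := Finset.mem_biUnion.1 hw
    exact hCstab c hc w hwC (mem_nbrF.1 hcw)
  -- NL applied to C in the whole graph
  have hCNSC : C.card ≤ NSC.card := by
    have hnb' : ∀ x ∈ (Finset.univ : Finset V), ∃ y ∈ (Finset.univ : Finset V), G.Adj x y := by
      intro x _
      obtain ⟨y, hy⟩ := hnbr x
      exact ⟨y, Finset.mem_univ y, hy⟩
    have hcrit' : ∀ x y, x ∈ (Finset.univ : Finset V) → y ∈ (Finset.univ : Finset V) →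
        G.Adj x y → ∃ W, W ⊆ Finset.univ ∧ Stab G W ∧ W.card + 1 = alF G Finset.univ ∧
          ∀ w ∈ W, ¬G.Adj x w ∧ ¬G.Adj y w ∧ w ≠ x ∧ w ≠ y := by
      intro x y _ _ hadj
      exact crit_witness hadj (hcritU x y hadj)
    have := NL G Finset.univ hnb' hcrit' C (Finset.subset_univ C) hCstab
    rwa [Finset.inter_univ] at this
  -- the leftover graph A₂ is core-free
  set A₂ := X \ (C ∪ NSC) with hA₂
  set α₂ := alF G A₂ with hα₂
  have hmaxsX : ∀ s : Finset V, s ⊆ X → Stab G s → s.card = αH →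
      (s \ C ⊆ A₂) ∧ (s \ C).card + C.card = αH := by
    intro s hsX hsst hscard
    have hCs : C ⊆ s := fun c hc => hCin c hc s hsX hsst hscard
    constructor
    · intro w hw
      obtain ⟨hws, hwC⟩ := Finset.mem_sdiff.1 hw
      refine Finset.mem_sdiff.2 ⟨hsX hws, ?_⟩
      rw [Finset.mem_union]
      push_neg
      refine ⟨hwC, ?_⟩
      intro hwNSC
      obtain ⟨c, hc, hcw⟩ := Finset.mem_biUnion.1 hwNSC
      exact hsst c (hCs hc) w hws (mem_nbrF.1 hcw)
    · rw [Finset.card_sdiff_of_subset hCs]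
      have := Finset.card_le_card hCs
      omega
  have hα₂eq : α₂ + C.card = αH := by
    obtain ⟨s, hsX, hsst, hscard⟩ := alF_witness G X
    obtain ⟨h1, h2⟩ := hmaxsX s hsX hsst hscard
    have hge : αH ≤ α₂ + C.card := by
      have := le_alF h1 (stab_mono Finset.sdiff_subset hsst)
      omega
    have hle : α₂ + C.card ≤ αH := by
      obtain ⟨t, htA₂, htst, htcard⟩ := alF_witness G A₂
      have htX : t ⊆ X := htA₂.trans Finset.sdiff_subset
      have htC : ∀ w ∈ t, w ∉ C := by
        intro w hw hwC
        have := Finset.mem_sdiff.1 (htA₂ hw)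
        exact this.2 (Finset.mem_union_left _ hwC)
      have hstab : Stab G (t ∪ C) := by
        intro a ha b hb hadj
        rcases Finset.mem_union.1 ha with ha' | ha' <;>
          rcases Finset.mem_union.1 hb with hb' | hb'
        · exact htst a ha' b hb' hadj
        · -- a ∈ t, b ∈ C : then a ∈ NSC, contradiction with t ⊆ A₂
          have : a ∈ NSC := Finset.mem_biUnion.2 ⟨b, hb', mem_nbrF.2 hadj.symm⟩
          exact ((Finset.mem_sdiff.1 (htA₂ ha')).2) (Finset.mem_union_right _ this)
        · have : b ∈ NSC := Finset.mem_biUnion.2 ⟨a, ha', mem_nbrF.2 hadj⟩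
          exact ((Finset.mem_sdiff.1 (htA₂ hb')).2) (Finset.mem_union_right _ this)
        · exact hCstab a ha' b hb' hadj
      have hsub : t ∪ C ⊆ X := Finset.union_subset htX hCX
      have := le_alF hsub hstab
      rw [Finset.card_union_of_disjoint (Finset.disjoint_left.2 htC)] at this
      omega
    omega
  -- A₂ has no core vertex, so 2 α₂ ≤ |A₂| by (the contrapositive of) KC
  have hKC : ¬ (A₂.card < 2 * α₂) := by
    intro hlt
    obtain ⟨z, hzA₂, hz⟩ := KC G A₂ hlt
    have hzC : z ∈ C := by
      rw [hC, Finset.mem_filter]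
      refine ⟨(Finset.mem_sdiff.1 hzA₂).1, ?_⟩
      intro s hsX hsst hscard
      obtain ⟨h1, h2⟩ := hmaxsX s hsX hsst hscard
      have : z ∈ s \ C := hz (s \ C) h1 (stab_mono Finset.sdiff_subset hsst) (by omega)
      exact (Finset.mem_sdiff.1 this).1
    exact (Finset.mem_sdiff.1 hzA₂).2 (Finset.mem_union_left _ hzC)
  push_neg at hKC
  -- final counting
  have hA₂card : A₂.card + (C.card + NSC.card) = X.card := by
    have hdisj : Disjoint C NSC := Finset.disjoint_right.2 hNSCC
    have hsub : C ∪ NSC ⊆ X := Finset.union_subset hCX hNSCX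
    rw [hA₂, Finset.card_sdiff_of_subset hsub, Finset.card_union_of_disjoint hdisj]
    have := Finset.card_le_card hsub
    rw [Finset.card_union_of_disjoint hdisj] at this
    omega
  omega

lemma closed_reach {G : SimpleGraph V} {K : Finset V}
    (hcl : ∀ x ∈ K, ∀ y, G.Adj x y → y ∈ K) :
    ∀ {a b : V}, G.Reachable a b → a ∈ K → b ∈ K := by
  intro a b hab ha
  obtain ⟨p⟩ := hab
  induction p with
  | nil => exact ha
  | cons h q ih => exact ih (hcl _ ha _ h) 

lemma exists_nbr {G : SimpleGraph V} (hconn : G.Connected) (hcard : 2 ≤ Fintype.card V)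
    (v : V) : ∃ w, G.Adj v w := by
  obtain ⟨w, hw⟩ := Fintype.exists_ne_of_one_lt_card (by omega) v
  obtain ⟨p⟩ := hconn.preconnected v w
  cases p with
  | nil => exact absurd rfl hw.symm
  | cons h q => exact ⟨_, h⟩

lemma deg_ne_one (G : SimpleGraph V) (hconn : G.Connected)
    (hcritU : ∀ x y : V, G.Adj x y →
      alF (G.deleteEdges {s(x, y)}) Finset.univ = alF G Finset.univ + 1)
    (hcard : 3 ≤ Fintype.card V) (v : V) : (nbrF G v).card ≠ 1 := by
  classical
  intro h1
  obtain ⟨u, hu⟩ := Finset.card_eq_one.1 h1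
  have hadj : G.Adj v u := by
    have : u ∈ nbrF G v := by rw [hu]; exact Finset.mem_singleton_self u
    exact mem_nbrF.1 this
  have hvnbr : ∀ x, G.Adj v x → x = u := by
    intro x hx
    have : x ∈ nbrF G v := mem_nbrF.2 hx
    rwa [hu, Finset.mem_singleton] at this
  by_cases hw : ∃ w, G.Adj u w ∧ w ≠ v
  · obtain ⟨w, huw, hwv⟩ := hw
    obtain ⟨W, -, hWst, hWcard, hWav⟩ := crit_witness huw (hcritU u w huw)
    have hvW : v ∉ W := fun h => (hWav v h).1 hadj.symm
    have hwW : w ∉ W := fun h => (hWav w h).2.2.2 rfl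
    have hwu : w ≠ u := huw.ne'
    have hmemT : ∀ x, x ∈ insert w (insert v W) → x = w ∨ x = v ∨ x ∈ W := by
      intro x hx
      rcases Finset.mem_insert.1 hx with h | hx'
      · exact Or.inl h
      · rcases Finset.mem_insert.1 hx' with h | h
        · exact Or.inr (Or.inl h)
        · exact Or.inr (Or.inr h)
    have hWu : ∀ x ∈ W, x ≠ u := fun x hx => (hWav x hx).2.2.1
    have hstab : Stab G (insert w (insert v W)) := by
      intro a ha b hb hab
      rcases hmemT a ha with ha' | ha' | ha' <;> rcases hmemT b hb with hb' | hb' | hb'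
      · rw [ha', hb'] at hab; exact G.loopless.irrefl _ hab
      · rw [ha', hb'] at hab
        exact hwu (hvnbr w hab.symm)
      · rw [ha'] at hab
        exact (hWav b hb').2.1 hab
      · rw [ha', hb'] at hab
        exact hwu (hvnbr w hab)
      · rw [ha', hb'] at hab; exact G.loopless.irrefl _ hab
      · rw [ha'] at hab
        exact hWu b hb' (hvnbr b hab)
      · rw [hb'] at hab
        exact (hWav a ha').2.1 hab.symm
      · rw [hb'] at hab
        exact hWu a ha' (hvnbr a hab.symm)
      · exact hWst a ha' b hb' hab
    have hcard2 : (insert w (insert v W)).card = W.card + 2 := by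
      rw [Finset.card_insert_of_notMem, Finset.card_insert_of_notMem hvW]
      rw [Finset.mem_insert]
      push_neg
      exact ⟨hwv, hwW⟩
    have := le_alF (Finset.subset_univ _) hstab
    omega
  · push_neg at hw
    have hcl : ∀ x ∈ ({v, u} : Finset V), ∀ y, G.Adj x y → y ∈ ({v, u} : Finset V) := by
      intro x hx y hxy
      rcases Finset.mem_insert.1 hx with rfl | hx'
      · rw [hvnbr y hxy]; simp
      · rw [Finset.mem_singleton] at hx'
        subst hx'
        rw [hw y hxy]; simp
    have hall : ∀ b : V, b ∈ ({v, u} : Finset V) := by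
      intro b
      exact closed_reach hcl (hconn.preconnected v b) (by simp)
    have : (Finset.univ : Finset V) ⊆ {v, u} := fun b _ => hall b
    have hc := Finset.card_le_card this
    rw [Finset.card_univ] at hc
    have : ({v, u} : Finset V).card ≤ 2 := Finset.card_insert_le _ _ |>.trans (by simp)
    omega

noncomputable def oth (G : SimpleGraph V) (x y : V) : V :=
  if h : ((nbrF G y).erase x).Nonempty then h.choose else x

lemma oth_spec {G : SimpleGraph V} (hdeg : ∀ v : V, (nbrF G v).card = 2)
    {x y : V} (hyx : G.Adj y x) :
    G.Adj y (oth G x y) ∧ oth G x y ≠ x ∧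
      (∀ c, G.Adj y c → c ≠ x → c = oth G x y) := by
  classical
  have hx : x ∈ nbrF G y := mem_nbrF.2 hyx
  have hcard : ((nbrF G y).erase x).card = 1 := by
    rw [Finset.card_erase_of_mem hx, hdeg y]
  have hne : ((nbrF G y).erase x).Nonempty := Finset.card_pos.1 (by omega)
  have hoth : oth G x y ∈ (nbrF G y).erase x := by
    rw [oth, dif_pos hne]
    exact hne.choose_spec
  obtain ⟨h1, h2⟩ := Finset.mem_erase.1 hoth
  refine ⟨mem_nbrF.1 h2, h1, ?_⟩
  intro c hc hcx
  have hc' : c ∈ (nbrF G y).erase x := Finset.mem_erase.2 ⟨hcx, mem_nbrF.2 hc⟩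
  exact Finset.card_le_one.1 (le_of_eq hcard) c hc' _ hoth

lemma nbr_pair_eq {G : SimpleGraph V} (hdeg : ∀ v : V, (nbrF G v).card = 2)
    {y x z : V} (hyx : G.Adj y x) (hyz : G.Adj y z) (hxz : x ≠ z) :
    nbrF G y = {x, z} := by
  classical
  have hsub : ({x, z} : Finset V) ⊆ nbrF G y := by
    intro c hc
    rcases Finset.mem_insert.1 hc with rfl | hc'
    · exact mem_nbrF.2 hyx
    · rw [Finset.mem_singleton.1 hc']
      exact mem_nbrF.2 hyz
  refine (Finset.eq_of_subset_of_card_le hsub ?_).symm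
  rw [hdeg y, Finset.card_pair hxz]

noncomputable def FF (G : SimpleGraph V) (v₀ a₀ : V) : ℕ → V × V
  | 0 => (v₀, a₀)
  | (k+1) => ((FF G v₀ a₀ k).2, oth G (FF G v₀ a₀ k).1 (FF G v₀ a₀ k).2)

noncomputable def ff (G : SimpleGraph V) (v₀ a₀ : V) (k : ℕ) : V := (FF G v₀ a₀ k).1

lemma ff_zero (G : SimpleGraph V) (v₀ a₀ : V) : ff G v₀ a₀ 0 = v₀ := rfl

lemma ff_one (G : SimpleGraph V) (v₀ a₀ : V) : ff G v₀ a₀ 1 = a₀ := rfl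

lemma ff_succ_succ (G : SimpleGraph V) (v₀ a₀ : V) (k : ℕ) :
    ff G v₀ a₀ (k + 2) = oth G (ff G v₀ a₀ k) (ff G v₀ a₀ (k + 1)) := rfl

/-- Main construction: a connected 2-regular graph on at least 3 vertices is a cycle. -/
lemma iso_cycle (G : SimpleGraph V) (hconn : G.Connected)
    (hcard3 : 3 ≤ Fintype.card V)
    (hdeg : ∀ v : V, (nbrF G v).card = 2) :
    Nonempty (G ≃g cycleGraph (Fintype.card V)) := by
  classical
  set n := Fintype.card V with hn
  -- start the walk
  have hnonempty : Nonempty V := Fintype.card_pos_iff.1 (by omega)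
  obtain ⟨v₀⟩ := hnonempty
  have hex : ∃ a, G.Adj v₀ a := by
    have h2 : 0 < (nbrF G v₀).card := by rw [hdeg]; omega
    obtain ⟨a, ha⟩ := Finset.card_pos.1 h2
    exact ⟨a, mem_nbrF.1 ha⟩
  obtain ⟨a₀, ha₀⟩ := hex
  set f := ff G v₀ a₀ with hf
  -- basic invariants
  have hfadj : ∀ k, G.Adj (f k) (f (k + 1)) := by
    intro k
    induction k with
    | zero => exact ha₀
    | succ k ih =>
      exact (oth_spec hdeg ih.symm).1
  have hfne2 : ∀ k, f (k + 2) ≠ f k := by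
    intro k
    exact (oth_spec hdeg (hfadj k).symm).2.1
  have hfne1 : ∀ k, f (k + 1) ≠ f k := fun k => (hfadj k).ne'
  -- the neighborhood of every f (k+1)
  have hnbrf : ∀ k, nbrF G (f (k + 1)) = {f k, f (k + 2)} := by
    intro k
    exact nbr_pair_eq hdeg (hfadj k).symm (hfadj (k + 1)) (Ne.symm (hfne2 k))
  -- existence of a collision
  have hcol : ∃ k, 0 < k ∧ ∃ j, j < k ∧ f j = f k := by
    have hmap : ∀ i ∈ Finset.range (n + 1), f i ∈ (Finset.univ : Finset V) :=
      fun i _ => Finset.mem_univ _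
    have hlt : (Finset.univ : Finset V).card < (Finset.range (n + 1)).card := by
      rw [Finset.card_univ, Finset.card_range]; omega
    obtain ⟨i, hi, j, hj, hij, hfij⟩ :=
      Finset.exists_ne_map_eq_of_card_lt_of_maps_to hlt hmap
    rcases lt_or_gt_of_ne hij with h | h
    · exact ⟨j, by omega, i, h, hfij⟩
    · exact ⟨i, by omega, j, h, hfij.symm⟩
  obtain ⟨hmpos', j₀, hj₀m', hj₀'⟩ := Nat.find_spec hcol
  have hmin' : ∀ k, k < Nat.find hcol → ¬(0 < k ∧ ∃ j, j < k ∧ f j = f k) := fun k hk =>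
    Nat.find_min hcol hk
  obtain ⟨m, hmpos, hj₀m, hj₀, hmin⟩ :
      ∃ m, 0 < m ∧ j₀ < m ∧ f j₀ = f m ∧ ∀ k, k < m → ¬(0 < k ∧ ∃ j, j < k ∧ f j = f k) :=
    ⟨Nat.find hcol, hmpos', hj₀m', hj₀', hmin'⟩
  clear hmin' hj₀' hj₀m' hmpos'
  have hinj : ∀ i j, i < j → j < m → f i ≠ f j := by
    intro i j hij hjm heq
    exact hmin j hjm ⟨by omega, i, hij, heq⟩
  have hm3 : 3 ≤ m := by
    rcases Nat.lt_or_ge m 3 with h | h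
    · interval_cases m
      · have : j₀ = 0 := by omega
        subst this
        exact absurd hj₀ (hfne1 0).symm
      · have : j₀ = 0 ∨ j₀ = 1 := by omega
        rcases this with rfl | rfl
        · exact absurd hj₀.symm (hfne2 0)
        · exact absurd hj₀ (hfne1 1).symm
    · exact h
  -- the collision is with f 0
  have hj₀0 : j₀ = 0 := by
    by_contra hj0
    have hj₀pos : 0 < j₀ := by omega
    -- f (m-1) is a neighbor of f m = f j₀
    have hadj' : G.Adj (f j₀) (f (m - 1)) := by
      have := (hfadj (m - 1)).symm
      have he : m - 1 + 1 = m := by omega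
      rw [he] at this
      rw [hj₀]
      exact this
    have hnb : nbrF G (f j₀) = {f (j₀ - 1), f (j₀ + 1)} := by
      have := hnbrf (j₀ - 1)
      have he : j₀ - 1 + 1 = j₀ := by omega
      have he2 : j₀ - 1 + 2 = j₀ + 1 := by omega
      rw [he, he2] at this
      exact this
    have hcases : f (m - 1) = f (j₀ - 1) ∨ f (m - 1) = f (j₀ + 1) := by
      have := mem_nbrF.2 hadj'
      rw [hnb] at this
      rcases Finset.mem_insert.1 this with h | h
      · exact Or.inl h
      · exact Or.inr (Finset.mem_singleton.1 h)
    rcases hcases with hcc | hcc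
    · exact hmin (m - 1) (by omega) ⟨by omega, j₀ - 1, by omega, hcc.symm⟩
    · rcases Nat.lt_trichotomy (j₀ + 1) (m - 1) with h | h | h
      · exact hmin (m - 1) (by omega) ⟨by omega, j₀ + 1, h, hcc.symm⟩
      · -- j₀ + 1 = m - 1, so j₀ = m - 2 and f m = f (m-2)
        have : j₀ = m - 2 := by omega
        subst this
        have he : m - 2 + 2 = m := by omega
        have := hfne2 (m - 2)
        rw [he] at this
        exact this hj₀.symm
      · -- j₀ + 1 = m, i.e. f m = f (m-1), adjacent
        have : j₀ = m - 1 := by omega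
        subst this
        have he : m - 1 + 1 = m := by omega
        have := hfne1 (m - 1)
        rw [he] at this
        exact this (hj₀.symm)
  subst hj₀0
  -- determinism and periodicity
  have hdet : ∀ a b, f a = f b → f (a + 1) = f (b + 1) → ∀ i, f (a + i) = f (b + i) := by
    intro a b h0 h1 i
    induction i using Nat.strong_induction_on with
    | _ i ih =>
    match i with
    | 0 => simpa using h0
    | 1 => simpa [← Nat.add_one, ← Nat.add_assoc] using h1
    | (i + 2) =>
      have ga : f (a + (i + 2)) = oth G (f (a + i)) (f (a + (i + 1))) := by
        have e1 : a + (i + 2) = (a + i) + 2 := by omega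
        have e3 : a + (i + 1) = (a + i) + 1 := by omega
        rw [e1, e3]
        rfl
      have gb : f (b + (i + 2)) = oth G (f (b + i)) (f (b + (i + 1))) := by
        have e2 : b + (i + 2) = (b + i) + 2 := by omega
        have e4 : b + (i + 1) = (b + i) + 1 := by omega
        rw [e2, e4]
        rfl
      rw [ga, gb, ih i (by omega), ih (i + 1) (by omega)]
  have hper1 : f (m + 1) = f 1 := by
    -- f(m+1) is the other neighbor of f m = f 0 w.r.t. f (m-1)
    have hadjm : G.Adj (f 0) (f (m + 1)) := by
      have := hfadj m
      rwa [← hj₀] at this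
    have hadjm1 : G.Adj (f 0) (f (m - 1)) := by
      have := (hfadj (m - 1)).symm
      have he : m - 1 + 1 = m := by omega
      rw [he, ← hj₀] at this
      exact this
    have hnb0 : nbrF G (f 0) = {f (m - 1), f 1} := by
      refine nbr_pair_eq hdeg hadjm1 (hfadj 0) ?_
      intro h
      exact hinj 1 (m - 1) (by omega) (by omega) h.symm
    have hne : f (m + 1) ≠ f (m - 1) := by
      have he : m - 1 + 2 = m + 1 := by omega
      have := hfne2 (m - 1)
      rw [he] at this
      exact this
    have := mem_nbrF.2 hadjm
    rw [hnb0] at this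
    rcases Finset.mem_insert.1 this with h | h
    · exact absurd h hne
    · exact Finset.mem_singleton.1 h
  have hper : ∀ k, f (m + k) = f k := by
    have := hdet m 0 hj₀.symm (by simpa using hper1)
    intro k
    simpa using this k
  have hmod : ∀ k, f k = f (k % m) := by
    intro k
    induction k using Nat.strong_induction_on with
    | _ k ih =>
    rcases Nat.lt_or_ge k m with h | h
    · rw [Nat.mod_eq_of_lt h]
    · have e : k = m + (k - m) := by omega
      rw [e, hper (k - m), Nat.add_mod_left]
      exact ih (k - m) (by omega)
  -- the image is everything
  set R := (Finset.range m).image f with hR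
  have hRcard : R.card = m := by
    rw [hR, Finset.card_image_of_injOn, Finset.card_range]
    intro i hi j hj hij
    rcases Nat.lt_trichotomy i j with h | h | h
    · exact absurd hij (hinj i j h (Finset.mem_range.1 hj))
    · exact h
    · exact absurd hij.symm (hinj j i h (Finset.mem_range.1 hi))
  have hRclosed : ∀ x ∈ R, ∀ y, G.Adj x y → y ∈ R := by
    intro x hx y hxy
    obtain ⟨j, hj, rfl⟩ := Finset.mem_image.1 hx
    rw [Finset.mem_range] at hj
    -- use the neighborhood of f j = f (j + m) = f ((j + m - 1) + 1)
    have he1 : j + m - 1 + 1 = j + m := by omega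
    have hfj : f j = f (j + m - 1 + 1) := by
      rw [he1, Nat.add_comm j m, hper]
    have hnb := hnbrf (j + m - 1)
    rw [← hfj] at hnb
    have he2 : j + m - 1 + 2 = j + m + 1 := by omega
    have := mem_nbrF.2 hxy
    rw [hnb] at this
    have hy : y = f (j + m - 1) ∨ y = f (j + m + 1) := by
      rcases Finset.mem_insert.1 this with h | h
      · exact Or.inl h
      · rw [he2] at h
        exact Or.inr (Finset.mem_singleton.1 h)
    rcases hy with rfl | rfl
    · rw [hmod (j + m - 1)]
      refine Finset.mem_image_of_mem f (Finset.mem_range.2 ?_)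
      exact Nat.mod_lt _ (by omega)
    · rw [hmod (j + m + 1)]
      refine Finset.mem_image_of_mem f (Finset.mem_range.2 ?_)
      exact Nat.mod_lt _ (by omega)
  have hRall : ∀ b : V, b ∈ R := by
    intro b
    refine closed_reach hRclosed (hconn.preconnected v₀ b) ?_
    exact Finset.mem_image_of_mem f (Finset.mem_range.2 (by omega : 0 < m))
  have hmn : m = n := by
    have : (Finset.univ : Finset V) ⊆ R := fun b _ => hRall b
    have h1 := Finset.card_le_card this
    have h2 := Finset.card_le_card (Finset.subset_univ R)
    rw [Finset.card_univ, ← hn] at h1 h2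
    omega
  rw [← hmn]
  -- build the isomorphism
  haveI : NeZero m := ⟨by omega⟩
  have hbij : Function.Bijective (fun i : Fin m => f i.val) := by
    constructor
    · intro i j hij
      rcases Nat.lt_trichotomy i.val j.val with h | h | h
      · exact absurd hij (hinj _ _ h j.isLt)
      · exact Fin.ext h
      · exact absurd hij.symm (hinj _ _ h i.isLt)
    · intro b
      obtain ⟨j, hj, hfj⟩ := Finset.mem_image.1 (hRall b)
      rw [Finset.mem_range] at hj
      exact ⟨⟨j, hj⟩, hfj⟩
  have hval1 : (1 : Fin m).val = 1 := by
    rw [Fin.val_one']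
    exact Nat.mod_eq_of_lt (by omega)
  have hadd1 : ∀ i : Fin m, (i + 1 : Fin m).val = (i.val + 1) % m := by
    intro i
    rw [Fin.add_def, hval1]
  have hkey : ∀ i : Fin m, f ((i + 1 : Fin m)).val = f (i.val + 1) := by
    intro i
    rw [hadd1, ← hmod]
  -- adjacency transfer
  have hadj_iff : ∀ i j : Fin m, G.Adj (f i.val) (f j.val) ↔ (cycleGraph m).Adj i j := by
    intro i j
    rw [SimpleGraph.cycleGraph_adj']
    constructor
    · intro hadj
      -- f j.val is a neighbor of f i.val
      have he1 : i.val + m - 1 + 1 = i.val + m := by omega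
      have hfj : f i.val = f (i.val + m - 1 + 1) := by
        rw [he1, Nat.add_comm i.val m, hper]
      have hnb := hnbrf (i.val + m - 1)
      rw [← hfj] at hnb
      have he2 : i.val + m - 1 + 2 = i.val + m + 1 := by omega
      have := mem_nbrF.2 hadj
      rw [hnb] at this
      have hy : f j.val = f (i.val + m - 1) ∨ f j.val = f (i.val + m + 1) := by
        rcases Finset.mem_insert.1 this with h | h
        · exact Or.inl h
        · rw [he2] at h
          exact Or.inr (Finset.mem_singleton.1 h)
      have hinj' : ∀ a b : ℕ, a < m → b < m → f a = f b → a = b := by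
        intro a b ha hb hab
        rcases Nat.lt_trichotomy a b with h | h | h
        · exact absurd hab (hinj a b h hb)
        · exact h
        · exact absurd hab.symm (hinj b a h ha)
      rcases hy with h | h
      · -- j ≡ i - 1
        left
        rw [hmod (i.val + m - 1)] at h
        have hj : j.val = (i.val + m - 1) % m := hinj' _ _ j.isLt (Nat.mod_lt _ (by omega)) h
        rw [Fin.sub_def]
        show (m - j.val + i.val) % m = 1
        rcases Nat.eq_zero_or_pos i.val with h0 | h0
        · have hjv : j.val = m - 1 := by
            rw [hj, h0]
            rw [Nat.zero_add, Nat.mod_eq_of_lt (by omega)]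
          rw [hjv, h0]
          have e : m - (m - 1) + 0 = 1 := by omega
          rw [e, Nat.mod_eq_of_lt (by omega)]
        · have hjv : j.val = i.val - 1 := by
            rw [hj]
            have e : i.val + m - 1 = (i.val - 1) + m := by omega
            rw [e, Nat.add_mod_right, Nat.mod_eq_of_lt (by omega)]
          rw [hjv]
          have hiltm : i.val < m := i.isLt
          have e : m - (i.val - 1) + i.val = m + 1 := by omega
          rw [e, Nat.add_mod_left, Nat.mod_eq_of_lt (by omega)]
      · -- j ≡ i + 1
        right
        rw [hmod (i.val + m + 1)] at h
        have hj : j.val = (i.val + m + 1) % m := hinj' _ _ j.isLt (Nat.mod_lt _ (by omega)) h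
        have hj' : j.val = (i.val + 1) % m := by
          rw [hj]
          have e : i.val + m + 1 = (i.val + 1) + m := by omega
          rw [e, Nat.add_mod_right]
        rw [Fin.sub_def]
        show (m - i.val + j.val) % m = 1
        have hiltm : i.val < m := i.isLt
        rcases Nat.lt_or_ge (i.val + 1) m with hlt | hge
        · have hjv : j.val = i.val + 1 := by rw [hj', Nat.mod_eq_of_lt hlt]
          rw [hjv]
          have e : m - i.val + (i.val + 1) = m + 1 := by omega
          rw [e, Nat.add_mod_left, Nat.mod_eq_of_lt (by omega)]
        · have hieq : i.val = m - 1 := by omega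
          have hjv : j.val = 0 := by
            rw [hj', hieq]
            have e : m - 1 + 1 = m := by omega
            rw [e, Nat.mod_self]
          rw [hjv, hieq]
          have e : m - (m - 1) + 0 = 1 := by omega
          rw [e, Nat.mod_eq_of_lt (by omega)]
    · intro hc
      rcases hc with h | h
      · -- i - j = 1, so i = j + 1
        have hij : i = j + 1 := by
          have : i - j = 1 := Fin.ext (by rw [h, hval1])
          have := sub_eq_iff_eq_add.1 this
          rw [this, add_comm]
        rw [hij, hkey j]
        exact (hfadj j.val).symm
      · have hij : j = i + 1 := by
          have : j - i = 1 := Fin.ext (by rw [h, hval1])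
          have := sub_eq_iff_eq_add.1 this
          rw [this, add_comm]
        rw [hij, hkey i]
        exact hfadj i.val
  -- assemble
  refine ⟨SimpleGraph.Iso.symm ⟨Equiv.ofBijective _ hbij, ?_⟩⟩
  intro i j
  show G.Adj (f i.val) (f j.val) ↔ (cycleGraph m).Adj i j
  exact hadj_iff i j

lemma main_iso (G : SimpleGraph V) (hconn : G.Connected)
    (hcritU : ∀ x y : V, G.Adj x y →
      alF (G.deleteEdges {s(x, y)}) Finset.univ = alF G Finset.univ + 1)
    (hcard : Fintype.card V = 2 * alF G Finset.univ + 1) :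
    Nonempty (G ≃g cycleGraph (Fintype.card V)) := by
  classical
  have hne : Nonempty V := by
    by_contra h
    rw [not_nonempty_iff] at h
    have : Fintype.card V = 0 := Fintype.card_eq_zero
    omega
  obtain ⟨v⟩ := hne
  have hα1 : 1 ≤ alF G Finset.univ := one_le_alF (Finset.mem_univ v)
  have hcard3 : 3 ≤ Fintype.card V := by omega
  have hnbr : ∀ x : V, ∃ y, G.Adj x y := fun x => exists_nbr hconn (by omega) x
  have hdeg : ∀ w : V, (nbrF G w).card = 2 := by
    intro w
    have h2 := degree_le_two G hnbr hcritU hcard w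
    have h1 := deg_ne_one G hconn hcritU hcard3 w
    have h0 : 0 < (nbrF G w).card := by
      obtain ⟨y, hy⟩ := hnbr w
      exact Finset.card_pos.2 ⟨y, mem_nbrF.2 hy⟩
    omega
  exact iso_cycle G hconn hcard3 hdeg


end AlphaCriticalDev

/-- A connected α-critical graph with defect one (that is, with
`|V(G)| = 2α(G) + 1`) is isomorphic to an odd cycle `C_n` for some odd `n ≥ 3`. -/

theorem connected_alphaCritical_defect_one {V : Type*} [Fintype V]
    (G : SimpleGraph V) (hconn : G.Connected) (hG : IsAlphaCritical G)
    (hdef : Fintype.card V = 2 * alphaNum G + 1) :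
    ∃ n : ℕ, 3 ≤ n ∧ Odd n ∧ Nonempty (G ≃g SimpleGraph.cycleGraph n) := by
  classical
  have hcritU : ∀ x y : V, G.Adj x y →
      AlphaCriticalDev.alF (G.deleteEdges {s(x, y)}) Finset.univ =
        AlphaCriticalDev.alF G Finset.univ + 1 := by
    intro x y hxy
    have h := hG x y hxy
    rw [AlphaCriticalDev.alphaNum_eq_alF, AlphaCriticalDev.alphaNum_eq_alF] at h
    exact h
  have hcard : Fintype.card V = 2 * AlphaCriticalDev.alF G Finset.univ + 1 := by
    rw [← AlphaCriticalDev.alphaNum_eq_alF]; exact hdef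
  obtain ⟨iso⟩ := AlphaCriticalDev.main_iso G hconn hcritU hcard
  have hne : Nonempty V := by
    by_contra h
    rw [not_nonempty_iff] at h
    have : Fintype.card V = 0 := Fintype.card_eq_zero
    omega
  obtain ⟨v⟩ := hne
  have hα1 : 1 ≤ AlphaCriticalDev.alF G Finset.univ :=
    AlphaCriticalDev.one_le_alF (Finset.mem_univ v)
  refine ⟨Fintype.card V, by omega, ⟨AlphaCriticalDev.alF G Finset.univ, by omega⟩, ⟨iso⟩⟩
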